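/- Sufficiency of the maximal invariant implies predictive invariance: under the setting of a finite group G acting on finite 𝒳 with maximal invariant η, if I(X;Y) = I(η(X);Y) (equivalently X ⟂ Y | η(X)), then for every g ∈ G and every x such that both x and g·x have positive μ_X-probability, μ_{Y|X}(·|x) = μ_{Y|X}(·|g·x). -/

import Mathlib

open Finset

noncomputable section

/-- Marginal distribution of the first coordinate of a joint distribution. -/
def margX {X Y : Type*} [Fintype Y] (μ : X → Y → ℝ) (x : X) : ℝ := ∑ y, μ x y

/-- Marginal distribution of the second coordinate. -/
def margY {X Y : Type*} [Fintype X] (μ : X → Y → ℝ) (y : Y) : ℝ := ∑ x, μ x y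

/-- Distribution of `U = η X`. -/
def margU {X Y U : Type*} [Fintype X] [Fintype Y] [DecidableEq U]
    (μ : X → Y → ℝ) (η : X → U) (u : U) : ℝ :=
  ∑ x, if η x = u then margX μ x else 0

/-- Joint probability `P(Y = y, η X = u)`. -/
def margYU {X Y U : Type*} [Fintype X] [DecidableEq U]
    (μ : X → Y → ℝ) (η : X → U) (y : Y) (u : U) : ℝ :=
  ∑ x, if η x = u then μ x y else 0

/-- Joint distribution of the pair `(η X, Y)`. -/
def jointUY {X Y U : Type*} [Fintype X] [DecidableEq U]
    (μ : X → Y → ℝ) (η : X → U) : U → Y → ℝ :=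
  fun u y => margYU μ η y u

/-- Shannon mutual information `I(X;Y)` of a joint distribution (natural log). -/
def MI {X Y : Type*} [Fintype X] [Fintype Y] (μ : X → Y → ℝ) : ℝ :=
  ∑ x, ∑ y, μ x y * Real.log (μ x y / (margX μ x * margY μ y))

/-- Conditional Shannon entropy `H(Y|X)`. -/
def condEnt {X Y : Type*} [Fintype X] [Fintype Y] (μ : X → Y → ℝ) : ℝ :=
  -∑ x, ∑ y, μ x y * Real.log (μ x y / margX μ x)

/-- Conditional mutual information `I(X;Y|U)` where `U = η X` is a deterministic
function of `X`. -/
def condMI {X Y U : Type*} [Fintype X] [Fintype Y] [DecidableEq U]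
    (μ : X → Y → ℝ) (η : X → U) : ℝ :=
  ∑ x, ∑ y, μ x y *
    Real.log (μ x y * margU μ η (η x) / (margX μ x * margYU μ η y (η x)))

/-- `μ` is a probability distribution on `X × Y`. -/
def IsDist {X Y : Type*} [Fintype X] [Fintype Y] (μ : X → Y → ℝ) : Prop :=
  (∀ x y, 0 ≤ μ x y) ∧ ∑ x, ∑ y, μ x y = 1

/-- `X` and `Y` are conditionally independent given `U = η X`: for every `u` with
`P(U = u) > 0`, `P(X = x, Y = y | U = u) = P(X = x | U = u) · P(Y = y | U = u)`
(stated multiplied through by `P(U = u)²`). -/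
def CondIndep {X Y U : Type*} [Fintype X] [Fintype Y] [DecidableEq U]
    (μ : X → Y → ℝ) (η : X → U) : Prop :=
  ∀ u, 0 < margU μ η u → ∀ x y,
    (if η x = u then μ x y else 0) * margU μ η u =
      (if η x = u then margX μ x else 0) * margYU μ η y u

/-- Cross-entropy risk `E_{(X,Y)∼μ}[− log v(Y|X)]` of a predictive conditional
distribution `v`. -/
def risk {X Y : Type*} [Fintype X] [Fintype Y] (μ : X → Y → ℝ) (v : X → Y → ℝ) : ℝ :=
  ∑ x, ∑ y, μ x y * (-Real.log (v x y))

/-- Kullback–Leibler divergence between two joint distributions on `X × Y`. -/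
def KL {X Y : Type*} [Fintype X] [Fintype Y] (μ ν : X → Y → ℝ) : ℝ :=
  ∑ x, ∑ y, μ x y * Real.log (μ x y / ν x y)

/-- Averaged conditional KL divergence `D(μ_{Y|X} ‖ v | μ_X)`. -/
def avgKL {X Y : Type*} [Fintype X] [Fintype Y] (μ : X → Y → ℝ) (v : X → Y → ℝ) : ℝ :=
  ∑ x, margX μ x * ∑ y,
    (μ x y / margX μ x) * Real.log ((μ x y / margX μ x) / v x y)

/-- Averaged conditional KL divergence in the latent domain:
`D(μ_{Y|U} ‖ v | μ_U)` for the encoder `η`. -/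
def decKL {X Y U : Type*} [Fintype X] [Fintype Y] [Fintype U] [DecidableEq U]
    (μ : X → Y → ℝ) (η : X → U) (v : U → Y → ℝ) : ℝ :=
  ∑ u, margU μ η u * ∑ y,
    (margYU μ η y u / margU μ η u) *
      Real.log ((margYU μ η y u / margU μ η u) / v u y)

set_option linter.unusedSectionVars false

section Aux
variable {X Y U : Type*} [Fintype X] [Fintype Y] [Fintype U] [DecidableEq U]
  (μ : X → Y → ℝ) (η : X → U)

lemma sum_margYU (u : U) : ∑ y, margYU μ η y u = margU μ η u := by
  unfold margYU margU margX
  rw [Finset.sum_comm]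
  refine Finset.sum_congr rfl fun x _ => ?_
  by_cases h : η x = u <;> simp [h]

lemma sum_margYU_over_u (y : Y) : ∑ u, margYU μ η y u = margY μ y := by
  unfold margYU margY
  rw [Finset.sum_comm]
  refine Finset.sum_congr rfl fun x _ => ?_
  simp

lemma margX_nonneg (h0 : ∀ x y, 0 ≤ μ x y) (x : X) : 0 ≤ margX μ x :=
  Finset.sum_nonneg fun y _ => h0 x y

lemma le_margX (h0 : ∀ x y, 0 ≤ μ x y) (x : X) (y : Y) : μ x y ≤ margX μ x :=
  Finset.single_le_sum (fun y _ => h0 x y) (mem_univ y)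

lemma le_margY (h0 : ∀ x y, 0 ≤ μ x y) (x : X) (y : Y) : μ x y ≤ margY μ y :=
  Finset.single_le_sum (fun x _ => h0 x y) (mem_univ x)

lemma margX_le_margU (h0 : ∀ x y, 0 ≤ μ x y) (x : X) :
    margX μ x ≤ margU μ η (η x) := by
  unfold margU
  have := Finset.single_le_sum (f := fun z => if η z = η x then margX μ z else 0)
    (fun z _ => by split <;> [exact margX_nonneg μ h0 z; exact le_rfl]) (mem_univ x)
  simpa using this

lemma le_margYU (h0 : ∀ x y, 0 ≤ μ x y) (x : X) (y : Y) :
    μ x y ≤ margYU μ η y (η x) := by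
  unfold margYU
  have := Finset.single_le_sum (f := fun z => if η z = η x then μ z y else 0)
    (fun z _ => by split <;> [exact h0 z y; exact le_rfl]) (mem_univ x)
  simpa using this

lemma margYU_nonneg (h0 : ∀ x y, 0 ≤ μ x y) (y : Y) (u : U) : 0 ≤ margYU μ η y u :=
  Finset.sum_nonneg fun x _ => by split <;> [exact h0 x y; exact le_rfl]

lemma margU_nonneg (h0 : ∀ x y, 0 ≤ μ x y) (u : U) : 0 ≤ margU μ η u :=
  Finset.sum_nonneg fun x _ => by split <;> [exact margX_nonneg μ h0 x; exact le_rfl]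


lemma sum_comm3 {A B C M : Type*} [Fintype A] [Fintype B] [Fintype C]
    [AddCommMonoid M] (f : A → B → C → M) :
    ∑ a, ∑ b, ∑ c, f a b c = ∑ c, ∑ b, ∑ a, f a b c := by
  calc ∑ a, ∑ b, ∑ c, f a b c
      = ∑ a, ∑ c, ∑ b, f a b c := Finset.sum_congr rfl fun a _ => Finset.sum_comm
    _ = ∑ c, ∑ a, ∑ b, f a b c := Finset.sum_comm
    _ = ∑ c, ∑ b, ∑ a, f a b c := Finset.sum_congr rfl fun c _ => Finset.sum_comm

lemma MI_jointUY_eq :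
    MI (jointUY μ η) = ∑ x, ∑ y, μ x y *
      Real.log (margYU μ η y (η x) / (margU μ η (η x) * margY μ y)) := by
  have h1 : MI (jointUY μ η) = ∑ u, ∑ y, margYU μ η y u *
      Real.log (margYU μ η y u / (margU μ η u * margY μ y)) := by
    unfold MI
    refine Finset.sum_congr rfl fun u _ => Finset.sum_congr rfl fun y _ => ?_
    have hX : margX (jointUY μ η) u = margU μ η u := by
      unfold margX jointUY; exact sum_margYU μ η u
    have hY : margY (jointUY μ η) y = margY μ y := by
      unfold margY jointUY; exact sum_margYU_over_u μ η y
    rw [hX, hY]; rfl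
  rw [h1]
  have h2 : ∀ u y, margYU μ η y u *
      Real.log (margYU μ η y u / (margU μ η u * margY μ y)) =
      ∑ x, if η x = u then μ x y *
        Real.log (margYU μ η y u / (margU μ η u * margY μ y)) else 0 := by
    intro u y
    unfold margYU
    rw [Finset.sum_mul]
    exact Finset.sum_congr rfl fun x _ => by split <;> simp
  simp only [h2]
  rw [sum_comm3]
  refine Finset.sum_congr rfl fun x _ => Finset.sum_congr rfl fun y _ => ?_
  have : ∀ u : U, (if η x = u then μ x y *
        Real.log (margYU μ η y u / (margU μ η u * margY μ y)) else 0)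
      = (if η x = u then μ x y *
        Real.log (margYU μ η y (η x) / (margU μ η (η x) * margY μ y)) else 0) := by
    intro u
    by_cases h : η x = u
    · rw [if_pos h, if_pos h, ← h]
    · rw [if_neg h, if_neg h]
  simp only [this]
  rw [Finset.sum_ite_eq]
  simp

lemma sum_b (h0 : ∀ x y, 0 ≤ μ x y) (x : X) :
    ∑ y, margX μ x * margYU μ η y (η x) / margU μ η (η x) = margX μ x := by
  rcases eq_or_lt_of_le (margX_nonneg μ h0 x) with h | h
  · simp [← h]
  · have hU : 0 < margU μ η (η x) := lt_of_lt_of_le h (margX_le_margU μ η h0 x)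
    rw [← Finset.sum_div, ← Finset.mul_sum, sum_margYU, mul_div_assoc,
      div_self hU.ne', mul_one]

lemma key (hμ : IsDist μ) (hsuf : MI μ = MI (jointUY μ η)) :
    ∀ x, 0 < margX μ x → ∀ y,
      μ x y / margX μ x = margYU μ η y (η x) / margU μ η (η x) := by
  obtain ⟨h0, hsum⟩ := hμ
  set b : X → Y → ℝ := fun x y => margX μ x * margYU μ η y (η x) / margU μ η (η x)
    with hb
  set F : X → Y → ℝ := fun x y =>
    (μ x y * Real.log (μ x y / (margX μ x * margY μ y)) -
     μ x y * Real.log (margYU μ η y (η x) / (margU μ η (η x) * margY μ y)))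
      - μ x y + b x y with hF
  -- pointwise facts in the positive case
  have hpos : ∀ x y, 0 < μ x y →
      F x y = μ x y * Real.log (μ x y / b x y) - μ x y + b x y ∧ 0 < b x y := by
    intro x y ha
    have hX : 0 < margX μ x := lt_of_lt_of_le ha (le_margX μ h0 x y)
    have hY : 0 < margY μ y := lt_of_lt_of_le ha (le_margY μ h0 x y)
    have hYU : 0 < margYU μ η y (η x) := lt_of_lt_of_le ha (le_margYU μ η h0 x y)
    have hU : 0 < margU μ η (η x) := lt_of_lt_of_le hX (margX_le_margU μ η h0 x)
    have hbpos : 0 < b x y := by rw [hb]; positivity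
    refine ⟨?_, hbpos⟩
    have hlog : Real.log (μ x y / (margX μ x * margY μ y)) -
        Real.log (margYU μ η y (η x) / (margU μ η (η x) * margY μ y)) =
        Real.log (μ x y / b x y) := by
      rw [Real.log_div ha.ne' (by positivity),
        Real.log_div hYU.ne' (by positivity),
        Real.log_mul hX.ne' hY.ne', Real.log_mul hU.ne' hY.ne',
        Real.log_div ha.ne' hbpos.ne', hb]
      rw [Real.log_div (by positivity) hU.ne', Real.log_mul hX.ne' hYU.ne']
      ring
    rw [hF]
    dsimp only
    rw [← mul_sub, hlog]
  have hFnonneg : ∀ x y, 0 ≤ F x y := by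
    intro x y
    rcases eq_or_lt_of_le (h0 x y) with ha | ha
    · have hbnn : 0 ≤ b x y := by
        rw [hb]
        have := margX_nonneg μ h0 x
        have := margYU_nonneg μ η h0 y (η x)
        have := margU_nonneg μ η h0 (η x)
        positivity
      rw [hF]; dsimp only; rw [← ha]; simpa using hbnn
    · obtain ⟨hFeq, hbpos⟩ := hpos x y ha
      rw [hFeq]
      have hlog := Real.log_le_sub_one_of_pos (x := b x y / μ x y) (by positivity)
      have hlog2 : Real.log (μ x y / b x y) = - Real.log (b x y / μ x y) := by
        rw [← Real.log_inv]; congr 1; field_simp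
      nlinarith [mul_le_mul_of_nonneg_left hlog (le_of_lt ha),
        mul_div_cancel₀ (b x y) ha.ne']
  -- total sum of F is zero
  have hsumF : ∑ x, ∑ y, F x y = 0 := by
    have hsb : ∑ x, ∑ y, b x y = 1 := by
      rw [show ∑ x, ∑ y, b x y = ∑ x, margX μ x from
        Finset.sum_congr rfl fun x _ => sum_b μ η h0 x]
      rw [← hsum]; rfl
    have : ∑ x, ∑ y, F x y =
        (MI μ - MI (jointUY μ η)) - (∑ x, ∑ y, μ x y) + (∑ x, ∑ y, b x y) := by
      rw [MI_jointUY_eq, MI]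
      rw [← Finset.sum_sub_distrib, ← Finset.sum_sub_distrib, ← Finset.sum_add_distrib]
      refine Finset.sum_congr rfl fun x _ => ?_
      rw [← Finset.sum_sub_distrib, ← Finset.sum_sub_distrib, ← Finset.sum_add_distrib]
    rw [this, hsuf, hsum, hsb]; ring
  have hFzero : ∀ x y, F x y = 0 := by
    have h1 : ∀ x ∈ Finset.univ, (0:ℝ) ≤ ∑ y, F x y :=
      fun x _ => Finset.sum_nonneg fun y _ => hFnonneg x y
    have h2 := (Finset.sum_eq_zero_iff_of_nonneg h1).mp hsumF
    intro x y
    have h3 := (Finset.sum_eq_zero_iff_of_nonneg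
      (fun y _ => hFnonneg x y)).mp (h2 x (Finset.mem_univ x))
    exact h3 y (Finset.mem_univ y)
  -- conclude
  intro x hX y
  have hU : 0 < margU μ η (η x) := lt_of_lt_of_le hX (margX_le_margU μ η h0 x)
  rcases eq_or_lt_of_le (h0 x y) with ha | ha
  · -- μ x y = 0 forces margYU = 0
    have hFx := hFzero x y
    rw [hF] at hFx; dsimp only at hFx
    rw [← ha] at hFx
    simp only [zero_mul, sub_zero, zero_sub, neg_add_eq_zero] at hFx
    -- hFx : 0 = b x y  (or b x y = 0)
    have hb0 : margX μ x * margYU μ η y (η x) / margU μ η (η x) = 0 := by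
      rw [hb] at hFx; linarith [hFx]
    have hYU0 : margYU μ η y (η x) = 0 := by
      have := div_eq_zero_iff.mp hb0
      rcases this with h | h
      · rcases mul_eq_zero.mp h with h' | h'
        · exact absurd h' hX.ne'
        · exact h'
      · exact absurd h hU.ne'
    rw [← ha, hYU0, zero_div, zero_div]
  · -- μ x y > 0: equality case of Gibbs
    obtain ⟨hFeq, hbpos⟩ := hpos x y ha
    have hab : μ x y = b x y := by
      by_contra hne
      have hr : b x y / μ x y ≠ 1 := by
        intro h
        exact hne ((div_eq_one_iff_eq ha.ne').mp h).symm
      have hlog := Real.log_lt_sub_one_of_pos (x := b x y / μ x y) (by positivity) hr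
      have hlog2 : Real.log (μ x y / b x y) = - Real.log (b x y / μ x y) := by
        rw [← Real.log_inv]; congr 1; field_simp
      have hFx := hFzero x y
      rw [hFeq] at hFx
      nlinarith [mul_lt_mul_of_pos_left hlog ha, mul_div_cancel₀ (b x y) ha.ne']
    rw [hab, hb]
    dsimp only
    field_simp

end Aux

/-- sufficiency of the maximal invariant implies predictive
invariance: if `I(X;Y) = I(η(X);Y)` for `η` maximal invariant, then
`μ_{Y|X}(·|x) = μ_{Y|X}(·|g·x)` whenever both points have positive probability. -/
theorem stmt17 {G X Y U : Type*} [Group G] [Fintype G] [Fintype X] [Fintype Y]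
    [Fintype U] [DecidableEq U] [MulAction G X]
    (μ : X → Y → ℝ) (hμ : IsDist μ) (η : X → U)
    (hmax : ∀ x z : X, η x = η z ↔ ∃ g : G, z = g • x)
    (hsuf : MI μ = MI (jointUY μ η)) :
    ∀ (g : G) (x : X), 0 < margX μ x → 0 < margX μ (g • x) →
      ∀ y, μ x y / margX μ x = μ (g • x) y / margX μ (g • x) := by
  intro g x hx hgx y
  have hu : η x = η (g • x) := (hmax x (g • x)).mpr ⟨g, rfl⟩
  have h1 := key μ η hμ hsuf x hx y
  have h2 := key μ η hμ hsuf (g • x) hgx y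
  rw [h1, h2, hu]
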